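/- Let V be the extraspecial group of exponent 3 and order 3^{2^m+1} (m ≥ 1) defined by generators v₁,…,v_{2^m}, z with relations v_i³ = z³ = [v_i,z] = 1 and [v_i,v_j] = z^{J_{i,j}}, where J_{i,j} = (−1)^{i−j} for i>j, −(−1)^{j−i} for j>i, 0 for i=j. Then the map a sending v_i ↦ v_{i+1} for i < 2^m, v_{2^m} ↦ v₁^{−1}, z ↦ z extends to an automorphism of V of order 2^{m+1}, and the map b sending v₁ ↦ v₁^{−1}, v_i ↦ v_{2^m−i+2} for i ≥ 2, z ↦ z^{−1} extends to an automorphism of order 2, satisfying bab = a^{−1}; hence ⟨a,b⟩ is dihedral of order 2^{m+2}. -/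

import Mathlib

namespace Stmt16Aux

variable {V : Type*} [Group V] {n : ℕ}

def zeta (z : V) (x : ZMod 3) : V := z ^ x.val

def nu (v : Fin n → V) (i : Fin n) (x : ZMod 3) : V := v i ^ x.val

def Pl (v : Fin n → V) (l : List (Fin n)) (e : Fin n → ZMod 3) : V :=
  (l.map fun i => nu v i (e i)).prod

def PP (v : Fin n → V) (e : Fin n → ZMod 3) : V := Pl v (List.finRange n) e

def Jz (J : Fin n → Fin n → ℤ) (i j : Fin n) : ZMod 3 := ((J i j : ℤ) : ZMod 3)

def TT (J : Fin n → Fin n → ℤ) (g : Fin n → ZMod 3) (j : Fin n) : ZMod 3 :=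
  ∑ i : Fin n, if (j:ℕ) < (i:ℕ) then g i * Jz J i j else 0

def om (J : Fin n → Fin n → ℤ) (g f : Fin n → ZMod 3) : ZMod 3 := ∑ j, f j * TT J g j

def Phi (v : Fin n → V) (z : V) (p : ZMod 3 × (Fin n → ZMod 3)) : V :=
  zeta z p.1 * PP v p.2

def sing (j : Fin n) (t : ZMod 3) : Fin n → ZMod 3 := fun i => if i = j then t else 0

lemma pow_mod3 (g : V) (hg : g ^ 3 = 1) (k : ℕ) : g ^ (k % 3) = g ^ k := by
  conv_rhs => rw [← Nat.div_add_mod k 3, pow_add, pow_mul, hg, one_pow, one_mul]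

lemma zeta_add (z : V) (hz : z ^ 3 = 1) (x y : ZMod 3) :
    zeta z (x + y) = zeta z x * zeta z y := by
  unfold zeta
  rw [ZMod.val_add, pow_mod3 z hz, pow_add]

lemma nu_add (v : Fin n → V) (hv : ∀ i, v i ^ 3 = 1) (i : Fin n) (x y : ZMod 3) :
    nu v i (x + y) = nu v i x * nu v i y := by
  unfold nu
  rw [ZMod.val_add, pow_mod3 (v i) (hv i), pow_add]

lemma zeta_zero (z : V) : zeta z 0 = 1 := by simp [zeta, ZMod.val_zero]

lemma nu_zero (v : Fin n → V) (i : Fin n) : nu v i 0 = 1 := by simp [nu, ZMod.val_zero]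

lemma nu_one (v : Fin n → V) (i : Fin n) : nu v i 1 = v i := by
  have : (1 : ZMod 3).val = 1 := rfl
  simp [nu, this]

lemma nu_neg_one (v : Fin n → V) (hv : ∀ i, v i ^ 3 = 1) (i : Fin n) :
    nu v i (-1) = (v i)⁻¹ := by
  have h : ((-1 : ZMod 3)).val = 2 := rfl
  rw [nu, h]
  have h2 : v i * v i ^ 2 = 1 := by
    rw [← pow_succ']; exact hv i
  exact (inv_eq_of_mul_eq_one_right h2).symm

lemma zeta_int (z : V) (hz : z ^ 3 = 1) (t : ℤ) : z ^ t = zeta z ((t : ZMod 3)) := by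
  have h3 : z ^ (3 : ℤ) = 1 := by rw [show (3:ℤ) = ((3:ℕ):ℤ) by norm_num, zpow_natCast, hz]
  have hval : (((t : ZMod 3)).val : ℤ) = t % 3 := ZMod.val_intCast t
  calc z ^ t = z ^ (t % 3 + 3 * (t / 3)) := by rw [Int.emod_add_mul_ediv t 3]
    _ = z ^ (t % 3) * (z ^ (3:ℤ)) ^ (t / 3) := by rw [zpow_add, zpow_mul]
    _ = z ^ (t % 3) := by rw [h3, one_zpow, mul_one]
    _ = z ^ (((t : ZMod 3)).val : ℤ) := by rw [hval]
    _ = zeta z ((t : ZMod 3)) := by rw [zpow_natCast]; rfl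



section WithHyp

variable (v : Fin n → V) (z : V) (J : Fin n → Fin n → ℤ)

lemma zcomm (hvz : ∀ i, v i * z = z * v i)
    (hgen : Subgroup.closure (Set.range v ∪ {z}) = ⊤) (g : V) : Commute z g := by
  have hg : g ∈ Subgroup.closure (Set.range v ∪ {z}) := by rw [hgen]; trivial
  induction hg using Subgroup.closure_induction with
  | mem x hx =>
    rcases hx with ⟨i, rfl⟩ | rfl
    · exact (hvz i).symm
    · rfl
  | one => exact Commute.one_right z
  | mul x y hx hy ihx ihy => exact ihx.mul_right ihy
  | inv x hx ih => exact ih.inv_right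

lemma zeta_comm (zc : ∀ g : V, Commute z g) (x : ZMod 3) (g : V) :
    zeta z x * g = g * zeta z x := ((zc g).pow_left _)

lemma swap_base (hcomm : ∀ i j, (v i)⁻¹ * (v j)⁻¹ * v i * v j = z ^ (J i j)) (i j : Fin n) :
    v i * v j = v j * v i * z ^ (J i j) := by
  rw [← hcomm i j]; group

lemma swap_pow1 (zc : ∀ g : V, Commute z g)
    (hcomm : ∀ i j, (v i)⁻¹ * (v j)⁻¹ * v i * v j = z ^ (J i j)) (i j : Fin n) (q : ℕ) :
    v i * v j ^ q = v j ^ q * v i * z ^ (J i j * q) := by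
  induction q with
  | zero => simp
  | succ q ih =>
    have hz : ∀ (t : ℤ) (g : V), z ^ t * g = g * z ^ t := fun t g => ((zc g).zpow_left t)
    calc v i * v j ^ (q+1) = (v i * v j ^ q) * v j := by rw [pow_succ, mul_assoc]
      _ = v j ^ q * v i * z ^ (J i j * q) * v j := by rw [ih]
      _ = v j ^ q * (v i * v j) * z ^ (J i j * q) := by
          rw [mul_assoc, mul_assoc, hz (J i j * q) (v j)]; group
      _ = v j ^ q * (v j * v i * z ^ (J i j)) * z ^ (J i j * q) := by
          rw [swap_base v z J hcomm i j]
      _ = v j ^ (q+1) * v i * z ^ (J i j * (q+1)) := by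
          rw [pow_succ]
          rw [show (J i j * (q+1) : ℤ) = J i j + J i j * q by push_cast; ring, zpow_add]
          group

lemma swap_pow (zc : ∀ g : V, Commute z g)
    (hcomm : ∀ i j, (v i)⁻¹ * (v j)⁻¹ * v i * v j = z ^ (J i j)) (i j : Fin n) (p q : ℕ) :
    v i ^ p * v j ^ q = v j ^ q * v i ^ p * z ^ (J i j * p * q) := by
  induction p with
  | zero => simp
  | succ p ih =>
    have hz : ∀ (t : ℤ) (g : V), z ^ t * g = g * z ^ t := fun t g => ((zc g).zpow_left t)
    calc v i ^ (p+1) * v j ^ q = v i ^ p * (v i * v j ^ q) := by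
          rw [pow_succ, mul_assoc]
      _ = v i ^ p * (v j ^ q * v i * z ^ (J i j * q)) := by rw [swap_pow1 v z J zc hcomm]
      _ = (v i ^ p * v j ^ q) * v i * z ^ (J i j * q) := by group
      _ = v j ^ q * v i ^ p * z ^ (J i j * p * q) * v i * z ^ (J i j * q) := by rw [ih]
      _ = v j ^ q * (v i ^ p * v i) * z ^ (J i j * p * q) * z ^ (J i j * q) := by
          rw [mul_assoc (v j ^ q * v i ^ p), hz (J i j * p * q) (v i)]; group
      _ = v j ^ q * v i ^ (p+1) * z ^ (J i j * (p+1) * q) := by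
          rw [pow_succ, show (J i j * (p+1) * q : ℤ) = J i j * p * q + J i j * q by push_cast; ring,
            zpow_add]
          group

lemma val_cast_self (p : ZMod 3) : ((p.val : ℕ) : ZMod 3) = p := by
  simp [ZMod.natCast_val, ZMod.cast_id]

lemma swap_nu (hz3 : z ^ 3 = 1) (zc : ∀ g : V, Commute z g)
    (hcomm : ∀ i j, (v i)⁻¹ * (v j)⁻¹ * v i * v j = z ^ (J i j)) (i j : Fin n) (p q : ZMod 3) :
    nu v i p * nu v j q = nu v j q * nu v i p * zeta z (Jz J i j * p * q) := by
  have h := swap_pow v z J zc hcomm i j p.val q.val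
  have h2 : z ^ (J i j * p.val * q.val : ℤ) = zeta z (Jz J i j * p * q) := by
    rw [zeta_int z hz3]
    congr 1
    push_cast
    rw [val_cast_self, val_cast_self]
    rfl
  rw [← h2]
  exact h



lemma Pl_cons (l : List (Fin n)) (i : Fin n) (e : Fin n → ZMod 3) :
    Pl v (i :: l) e = nu v i (e i) * Pl v l e := by simp [Pl]

lemma Pl_congr (l : List (Fin n)) (e e' : Fin n → ZMod 3) (h : ∀ i ∈ l, e i = e' i) :
    Pl v l e = Pl v l e' := by
  unfold Pl
  congr 1
  exact List.map_congr_left fun i hi => by rw [h i hi]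

lemma slide (hz3 : z ^ 3 = 1) (zc : ∀ g : V, Commute z g)
    (hcomm : ∀ i j, (v i)⁻¹ * (v j)⁻¹ * v i * v j = z ^ (J i j)) (j : Fin n) (t : ZMod 3)
    (l : List (Fin n)) (hl : ∀ i ∈ l, (j:ℕ) < (i:ℕ)) (g : Fin n → ZMod 3) :
    Pl v l g * nu v j t =
      nu v j t * Pl v l g * zeta z (t * (l.map fun i => g i * Jz J i j).sum) := by
  induction l with
  | nil => simp [Pl, zeta_zero]
  | cons i l ih =>
    have hij : (j:ℕ) < (i:ℕ) := hl i (by simp)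
    have ih' := ih (fun x hx => hl x (by simp [hx]))
    have c1 := swap_nu v z J hz3 zc hcomm i j (g i) t
    calc Pl v (i::l) g * nu v j t
        = nu v i (g i) * (Pl v l g * nu v j t) := by rw [Pl_cons, mul_assoc]
      _ = nu v i (g i) * (nu v j t * Pl v l g *
            zeta z (t * (l.map fun i => g i * Jz J i j).sum)) := by rw [ih']
      _ = (nu v i (g i) * nu v j t) * Pl v l g *
            zeta z (t * (l.map fun i => g i * Jz J i j).sum) := by group
      _ = nu v j t * nu v i (g i) * zeta z (Jz J i j * g i * t) * Pl v l g *
            zeta z (t * (l.map fun i => g i * Jz J i j).sum) := by rw [c1]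
      _ = nu v j t * Pl v (i::l) g * (zeta z (Jz J i j * g i * t) *
            zeta z (t * (l.map fun i => g i * Jz J i j).sum)) := by
          rw [mul_assoc (nu v j t * nu v i (g i)) (zeta z _) (Pl v l g),
            zeta_comm z zc _ (Pl v l g), Pl_cons]
          group
      _ = nu v j t * Pl v (i::l) g *
            zeta z (t * ((i::l).map fun i => g i * Jz J i j).sum) := by
          rw [← zeta_add z hz3]
          congr 1
          rw [List.map_cons, List.sum_cons]
          ring



lemma insert_nu (hv3 : ∀ i, v i ^ 3 = 1) (hz3 : z ^ 3 = 1) (zc : ∀ g : V, Commute z g)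
    (hcomm : ∀ i j, (v i)⁻¹ * (v j)⁻¹ * v i * v j = z ^ (J i j)) (j : Fin n) (t : ZMod 3)
    (l : List (Fin n)) (hl : l.Pairwise (· < ·)) (hj : j ∈ l) (g : Fin n → ZMod 3) :
    Pl v l g * nu v j t =
      zeta z (t * (l.map fun x : Fin n =>
          if (j:ℕ) < (x:ℕ) then g x * Jz J x j else 0).sum) *
        Pl v l (fun x => g x + sing j t x) := by
  induction l with
  | nil => exact absurd hj (by simp)
  | cons i l ih =>
    obtain ⟨h1, h2⟩ := List.pairwise_cons.mp hl
    rcases eq_or_ne i j with rfl | hij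
    · have hgt : ∀ x ∈ l, (i:ℕ) < (x:ℕ) := fun x hx => h1 x hx
      have hsl := slide v z J hz3 zc hcomm i t l hgt g
      have hnotmem : i ∉ l := fun hmem => lt_irrefl i (h1 i hmem)
      have e2 : Pl v l (fun x => g x + sing i t x) = Pl v l g := by
        refine Pl_congr v l _ _ fun x hx => ?_
        have hxi : x ≠ i := fun h => hnotmem (h ▸ hx)
        simp [sing, hxi]
      have e3 : ((i::l).map fun x : Fin n =>
          if (i:ℕ) < (x:ℕ) then g x * Jz J x i else 0).sum
          = (l.map fun x : Fin n => g x * Jz J x i).sum := by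
        rw [List.map_cons, List.sum_cons, if_neg (lt_irrefl _), zero_add]
        have : (l.map fun x : Fin n => if (i:ℕ) < (x:ℕ) then g x * Jz J x i else 0)
            = l.map fun x : Fin n => g x * Jz J x i :=
          List.map_congr_left fun x hx => if_pos (hgt x hx)
        rw [this]
      have e1 : sing i t i = t := by simp [sing]
      calc Pl v (i::l) g * nu v i t
          = nu v i (g i) * (Pl v l g * nu v i t) := by rw [Pl_cons, mul_assoc]
        _ = nu v i (g i) * (nu v i t * Pl v l g *
              zeta z (t * (l.map fun x : Fin n => g x * Jz J x i).sum)) := by rw [hsl]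
        _ = (nu v i (g i) * nu v i t) * Pl v l g *
              zeta z (t * (l.map fun x : Fin n => g x * Jz J x i).sum) := by group
        _ = nu v i (g i + t) * Pl v l g *
              zeta z (t * (l.map fun x : Fin n => g x * Jz J x i).sum) := by
            rw [nu_add v hv3]
        _ = zeta z (t * (l.map fun x : Fin n => g x * Jz J x i).sum) *
              (nu v i (g i + t) * Pl v l g) := by
            rw [← zeta_comm z zc]
        _ = zeta z (t * ((i::l).map fun x : Fin n =>
              if (i:ℕ) < (x:ℕ) then g x * Jz J x i else 0).sum) *
              Pl v (i::l) (fun x => g x + sing i t x) := by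
            rw [Pl_cons, e1, e2, e3]

    · have hjl : j ∈ l := by
        rcases List.mem_cons.mp hj with h | h
        · exact absurd h.symm hij
        · exact h
      have hilt : (i:ℕ) < (j:ℕ) := h1 j hjl
      have ih' := ih h2 hjl
      have e1 : sing j t i = 0 := by simp [sing, hij]
      have e3 : ((i::l).map fun x : Fin n =>
          if (j:ℕ) < (x:ℕ) then g x * Jz J x j else 0).sum
          = (l.map fun x : Fin n => if (j:ℕ) < (x:ℕ) then g x * Jz J x j else 0).sum := by
        rw [List.map_cons, List.sum_cons, if_neg (by omega), zero_add]
      calc Pl v (i::l) g * nu v j t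
          = nu v i (g i) * (Pl v l g * nu v j t) := by rw [Pl_cons, mul_assoc]
        _ = nu v i (g i) * (zeta z (t * (l.map fun x : Fin n =>
              if (j:ℕ) < (x:ℕ) then g x * Jz J x j else 0).sum) *
              Pl v l (fun x => g x + sing j t x)) := by rw [ih']
        _ = zeta z (t * (l.map fun x : Fin n =>
              if (j:ℕ) < (x:ℕ) then g x * Jz J x j else 0).sum) *
              (nu v i (g i) * Pl v l (fun x => g x + sing j t x)) := by
            rw [← mul_assoc, ← zeta_comm z zc, mul_assoc]
        _ = zeta z (t * ((i::l).map fun x : Fin n =>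
              if (j:ℕ) < (x:ℕ) then g x * Jz J x j else 0).sum) *
              Pl v (i::l) (fun x => g x + sing j t x) := by
            rw [Pl_cons, e1, add_zero, e3]

lemma TT_add_sing (j j' : Fin n) (h : ¬ ((j':ℕ) < (j:ℕ))) (g : Fin n → ZMod 3) (t : ZMod 3) :
    TT J (fun i => g i + sing j t i) j' = TT J g j' := by
  unfold TT
  refine Finset.sum_congr rfl fun i _ => ?_
  by_cases hii : (j':ℕ) < (i:ℕ)
  · rw [if_pos hii, if_pos hii]
    have hij : i ≠ j := by
      intro hh
      subst hh
      exact h hii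
    simp [sing, hij]
  · rw [if_neg hii, if_neg hii]

lemma merge (hv3 : ∀ i, v i ^ 3 = 1) (hz3 : z ^ 3 = 1) (zc : ∀ g : V, Commute z g)
    (hcomm : ∀ i j, (v i)⁻¹ * (v j)⁻¹ * v i * v j = z ^ (J i j)) (f : Fin n → ZMod 3)
    (l : List (Fin n)) (hl : l.Pairwise (· < ·)) (g : Fin n → ZMod 3) :
    PP v g * Pl v l f =
      zeta z ((l.map fun j => f j * TT J g j).sum) *
        PP v (fun i => g i + (l.map fun j => sing j (f j) i).sum) := by
  induction l generalizing g with
  | nil => simp [Pl, zeta_zero]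
  | cons j l ih =>
    obtain ⟨h1, h2⟩ := List.pairwise_cons.mp hl
    have hins := insert_nu v z J hv3 hz3 zc hcomm j (f j) (List.finRange n)
      (List.pairwise_lt_finRange n) (List.mem_finRange j) g
    have hfull : ((List.finRange n).map fun x : Fin n =>
        if (j:ℕ) < (x:ℕ) then g x * Jz J x j else 0).sum = TT J g j := by
      rw [TT, Fin.sum_univ_def]
    rw [hfull] at hins
    have hins' : PP v g * nu v j (f j) =
        zeta z (f j * TT J g j) * PP v (fun x => g x + sing j (f j) x) := hins
    have ih' := ih h2 (fun i => g i + sing j (f j) i)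
    have eTT : (l.map fun j' => f j' * TT J (fun i => g i + sing j (f j) i) j')
        = l.map fun j' => f j' * TT J g j' := by
      refine List.map_congr_left fun j' hj' => ?_
      rw [TT_add_sing J j j' (by have := h1 j' hj'; omega) g (f j)]
    rw [eTT] at ih'
    calc PP v g * Pl v (j::l) f
        = (PP v g * nu v j (f j)) * Pl v l f := by rw [Pl_cons, ← mul_assoc]
      _ = zeta z (f j * TT J g j) *
            ((PP v (fun i => g i + sing j (f j) i)) * Pl v l f) := by
          rw [hins', mul_assoc]
      _ = zeta z (f j * TT J g j) *
            (zeta z ((l.map fun j' => f j' * TT J g j').sum) *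
              PP v (fun i => (g i + sing j (f j) i) +
                (l.map fun j' => sing j' (f j') i).sum)) := by
          rw [ih']
      _ = zeta z (((j::l).map fun j' => f j' * TT J g j').sum) *
            PP v (fun i => g i + ((j::l).map fun j' => sing j' (f j') i).sum) := by
          rw [← mul_assoc, ← zeta_add z hz3, List.map_cons, List.sum_cons]
          have : (fun i => (g i + sing j (f j) i) +
              (l.map fun j' => sing j' (f j') i).sum)
              = fun i => g i + ((sing j (f j) i :: l.map fun j' => sing j' (f j') i).sum) := by
            funext i
            rw [List.sum_cons, add_assoc]
          rw [this]
          rfl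

lemma PP_mul (hv3 : ∀ i, v i ^ 3 = 1) (hz3 : z ^ 3 = 1) (zc : ∀ g : V, Commute z g)
    (hcomm : ∀ i j, (v i)⁻¹ * (v j)⁻¹ * v i * v j = z ^ (J i j)) (g f : Fin n → ZMod 3) :
    PP v g * PP v f = zeta z (om J g f) * PP v (fun i => g i + f i) := by
  have h := merge v z J hv3 hz3 zc hcomm f (List.finRange n) (List.pairwise_lt_finRange n) g
  have e1 : ((List.finRange n).map fun j => f j * TT J g j).sum = om J g f := by
    rw [om, Fin.sum_univ_def]
  have e2 : (fun i => g i + ((List.finRange n).map fun j => sing j (f j) i).sum)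
      = fun i => g i + f i := by
    funext i
    congr 1
    rw [← Fin.sum_univ_def (fun j => sing j (f j) i)]
    simp [sing, Finset.sum_ite_eq' Finset.univ i f]
  rw [e1, e2] at h
  exact h

lemma Phi_mul (hv3 : ∀ i, v i ^ 3 = 1) (hz3 : z ^ 3 = 1) (zc : ∀ g : V, Commute z g)
    (hcomm : ∀ i j, (v i)⁻¹ * (v j)⁻¹ * v i * v j = z ^ (J i j))
    (p q : ZMod 3 × (Fin n → ZMod 3)) :
    Phi v z p * Phi v z q =
      Phi v z (p.1 + q.1 + om J p.2 q.2, fun i => p.2 i + q.2 i) := by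
  unfold Phi
  calc zeta z p.1 * PP v p.2 * (zeta z q.1 * PP v q.2)
      = zeta z p.1 * zeta z q.1 * (PP v p.2 * PP v q.2) := by
        rw [mul_assoc, ← mul_assoc (PP v p.2), ← zeta_comm z zc q.1 (PP v p.2)]
        group
    _ = zeta z (p.1 + q.1) * (zeta z (om J p.2 q.2) *
          PP v (fun i => p.2 i + q.2 i)) := by
        rw [PP_mul v z J hv3 hz3 zc hcomm, zeta_add z hz3]
    _ = zeta z (p.1 + q.1 + om J p.2 q.2) * PP v (fun i => p.2 i + q.2 i) := by
        rw [zeta_add z hz3 (p.1 + q.1), mul_assoc]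



lemma Pl_zero (l : List (Fin n)) : Pl v l (fun _ => 0) = 1 := by
  induction l with
  | nil => rfl
  | cons i l ih => rw [Pl_cons, ih, nu_zero, one_mul]

lemma Phi_one : Phi v z (0, fun _ => 0) = 1 := by
  rw [Phi, zeta_zero]
  exact one_mul _ |>.trans (Pl_zero v _)

lemma Pl_sing (j : Fin n) (t : ZMod 3) (l : List (Fin n)) (hl : l.Nodup) :
    Pl v l (sing j t) = if j ∈ l then nu v j t else 1 := by
  induction l with
  | nil => rfl
  | cons i l ih =>
    obtain ⟨hnot, hnd⟩ := List.nodup_cons.mp hl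
    rw [Pl_cons, ih hnd]
    rcases eq_or_ne i j with rfl | hij
    · rw [if_neg hnot]
      simp [sing]
    · have h0 : sing j t i = 0 := by simp [sing, hij]
      rw [h0, nu_zero, one_mul]
      simp [List.mem_cons, Ne.symm hij]

lemma PP_sing (j : Fin n) (t : ZMod 3) : PP v (sing j t) = nu v j t := by
  rw [PP, Pl_sing v j t _ (List.nodup_finRange n), if_pos (List.mem_finRange j)]

lemma Phi_v (i : Fin n) : Phi v z (0, sing i 1) = v i := by
  rw [Phi, zeta_zero, one_mul, PP_sing, nu_one]

lemma Phi_z : Phi v z (1, fun _ => 0) = z := by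
  show zeta z 1 * PP v (fun _ => 0) = z
  rw [show PP v (fun _ => (0 : ZMod 3)) = 1 from Pl_zero v _, mul_one]
  show z ^ (1 : ZMod 3).val = z
  rw [show (1 : ZMod 3).val = 1 from rfl, pow_one]

lemma Phi_surj (hv3 : ∀ i, v i ^ 3 = 1) (hz3 : z ^ 3 = 1) (zc : ∀ g : V, Commute z g)
    (hcomm : ∀ i j, (v i)⁻¹ * (v j)⁻¹ * v i * v j = z ^ (J i j))
    (hgen : Subgroup.closure (Set.range v ∪ {z}) = ⊤) :
    Function.Surjective (Phi v z) := by
  let Γ : Subgroup V :=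
    { carrier := Set.range (Phi v z)
      one_mem' := ⟨(0, fun _ => 0), Phi_one v z⟩
      mul_mem' := by
        rintro x y ⟨p, rfl⟩ ⟨q, rfl⟩
        exact ⟨_, (Phi_mul v z J hv3 hz3 zc hcomm p q).symm⟩
      inv_mem' := by
        rintro x ⟨p, rfl⟩
        have h := Phi_mul v z J hv3 hz3 zc hcomm p
          (-p.1 - om J p.2 (fun i => -p.2 i), fun i => -p.2 i)
        have h2 : Phi v z p * Phi v z (-p.1 - om J p.2 (fun i => -p.2 i), fun i => -p.2 i)
            = 1 := by
          rw [h]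
          have e1 : (p.1 + (-p.1 - om J p.2 (fun i => -p.2 i)) +
              om J p.2 (fun i => -p.2 i)) = 0 := by ring
          have e2 : (fun i => p.2 i + -p.2 i) = fun _ => (0 : ZMod 3) := by
            funext i; ring
          rw [show ((p.1 + (-p.1 - om J p.2 fun i => -p.2 i, fun i => -p.2 i).1 +
              om J p.2 (-p.1 - om J p.2 fun i => -p.2 i, fun i => -p.2 i).2,
              fun i => p.2 i + (-p.1 - om J p.2 fun i => -p.2 i, fun i => -p.2 i).2 i) :
              ZMod 3 × (Fin n → ZMod 3))
              = (0, fun _ => 0) from Prod.ext e1 e2, Phi_one]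
        exact ⟨(-p.1 - om J p.2 (fun i => -p.2 i), fun i => -p.2 i),
          (inv_eq_of_mul_eq_one_right h2).symm⟩ }
  intro x
  have hx : x ∈ Γ := by
    have : (⊤ : Subgroup V) ≤ Γ := by
      rw [← hgen]
      refine Subgroup.closure_le Γ |>.mpr ?_
      rintro y hy
      rcases hy with ⟨i, rfl⟩ | hy2
      · exact ⟨(0, sing i 1), Phi_v v z i⟩
      · rw [Set.mem_singleton_iff] at hy2
        exact ⟨(1, fun _ => 0), by rw [hy2]; exact Phi_z v z⟩
    exact this trivial
  exact hx

lemma Phi_bij [Fintype V] (hv3 : ∀ i, v i ^ 3 = 1) (hz3 : z ^ 3 = 1)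
    (zc : ∀ g : V, Commute z g)
    (hcomm : ∀ i j, (v i)⁻¹ * (v j)⁻¹ * v i * v j = z ^ (J i j))
    (hgen : Subgroup.closure (Set.range v ∪ {z}) = ⊤)
    (hcard : Nat.card V = 3 ^ (n + 1)) :
    Function.Bijective (Phi v z) := by
  rw [Fintype.bijective_iff_surjective_and_card]
  refine ⟨Phi_surj v z J hv3 hz3 zc hcomm hgen, ?_⟩
  have hV : Fintype.card V = 3 ^ (n + 1) := by
    rw [← Nat.card_eq_fintype_card, hcard]
  rw [hV, Fintype.card_prod, Fintype.card_fun]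
  simp [ZMod.card]
  ring

lemma TT_addf (g g' : Fin n → ZMod 3) (j : Fin n) :
    TT J (fun i => g i + g' i) j = TT J g j + TT J g' j := by
  unfold TT
  rw [← Finset.sum_add_distrib]
  refine Finset.sum_congr rfl fun i _ => ?_
  by_cases h : (j:ℕ) < (i:ℕ) <;> simp [h] <;> ring

lemma om_add_left (g g' f : Fin n → ZMod 3) :
    om J (fun i => g i + g' i) f = om J g f + om J g' f := by
  unfold om
  rw [← Finset.sum_add_distrib]
  refine Finset.sum_congr rfl fun j _ => ?_
  rw [TT_addf]
  ring

lemma om_add_right (g f f' : Fin n → ZMod 3) :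
    om J g (fun i => f i + f' i) = om J g f + om J g f' := by
  unfold om
  rw [← Finset.sum_add_distrib]
  refine Finset.sum_congr rfl fun j _ => ?_
  ring

def thetaF (J : Fin n → Fin n → ℤ) (α : (Fin n → ZMod 3) → (Fin n → ZMod 3)) (εz : ZMod 3)
    (e : Fin n → ZMod 3) : ZMod 3 :=
  -(om J (α e) (α e) - εz * om J e e)

lemma mkAut [Fintype V] (hv3 : ∀ i, v i ^ 3 = 1) (hz3 : z ^ 3 = 1)
    (zc : ∀ g : V, Commute z g)
    (hcomm : ∀ i j, (v i)⁻¹ * (v j)⁻¹ * v i * v j = z ^ (J i j))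
    (hgen : Subgroup.closure (Set.range v ∪ {z}) = ⊤)
    (hcard : Nat.card V = 3 ^ (n + 1))
    (α : (Fin n → ZMod 3) → (Fin n → ZMod 3)) (εz : ZMod 3)
    (hα_add : ∀ e e', α (fun i => e i + e' i) = fun i => α e i + α e' i)
    (hα_inj : Function.Injective α)
    (hε : εz = 1 ∨ εz = -1)
    (hS : ∀ e e', om J (α e) (α e') - εz * om J e e'
        = om J (α e') (α e) - εz * om J e' e) :
    ∃ A : MulAut V, ∀ p : ZMod 3 × (Fin n → ZMod 3),
      A (Phi v z p) = Phi v z (εz * p.1 + thetaF J α εz p.2, α p.2) := by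
  have hbij := Phi_bij v z J hv3 hz3 zc hcomm hgen hcard
  have hε2 : εz * εz = 1 := by rcases hε with h | h <;> rw [h] <;> ring
  set F : (ZMod 3 × (Fin n → ZMod 3)) → (ZMod 3 × (Fin n → ZMod 3)) :=
    fun p => (εz * p.1 + thetaF J α εz p.2, α p.2) with hF
  have hFinj : Function.Injective F := by
    intro p q h
    have h2 : α p.2 = α q.2 := congrArg Prod.snd h
    have hp2 : p.2 = q.2 := hα_inj h2
    have h1 : εz * p.1 + thetaF J α εz p.2 = εz * q.1 + thetaF J α εz q.2 :=
      congrArg Prod.fst h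
    rw [hp2] at h1
    have : εz * p.1 = εz * q.1 := by
      have := add_right_cancel h1
      exact this
    have : p.1 = q.1 := by
      have h3 := congrArg (fun x => εz * x) this
      simpa [← mul_assoc, hε2] using h3
    exact Prod.ext this hp2
  have hFbij : Function.Bijective F := (Finite.injective_iff_bijective).mp hFinj
  have hθ : ∀ e e', thetaF J α εz (fun i => e i + e' i)
      = thetaF J α εz e + thetaF J α εz e'
        + (om J (α e) (α e') - εz * om J e e') := by
    intro e e'
    unfold thetaF
    rw [hα_add, om_add_left, om_add_right, om_add_right, om_add_left, om_add_right,
      om_add_right]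
    have h3 : (3 : ZMod 3) = 0 := by decide
    linear_combination (hS e e') + (εz * om J e e' - om J (α e) (α e')) * h3
  let eΦ := Equiv.ofBijective (Phi v z) hbij
  let eF := Equiv.ofBijective F hFbij
  let E : V ≃ V := eΦ.symm.trans (eF.trans eΦ)
  have hE : ∀ p, E (Phi v z p) = Phi v z (F p) := by
    intro p
    show eΦ (eF (eΦ.symm (Phi v z p))) = Phi v z (F p)
    have : eΦ.symm (Phi v z p) = p := by
      apply hbij.injective
      show Phi v z _ = Phi v z p
      exact eΦ.apply_symm_apply (Phi v z p)
    rw [this]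
    rfl
  refine ⟨{ toEquiv := E, map_mul' := ?_ }, fun p => hE p⟩
  intro x y
  obtain ⟨p, rfl⟩ := hbij.surjective x
  obtain ⟨q, rfl⟩ := hbij.surjective y
  show E (Phi v z p * Phi v z q) = E (Phi v z p) * E (Phi v z q)
  rw [Phi_mul v z J hv3 hz3 zc hcomm, hE, hE, hE,
    Phi_mul v z J hv3 hz3 zc hcomm]
  show Phi v z (F (p.1 + q.1 + om J p.2 q.2, fun i => p.2 i + q.2 i)) = _
  congr 1
  rw [hF]
  refine Prod.ext ?_ ?_
  · show εz * (p.1 + q.1 + om J p.2 q.2) + thetaF J α εz (fun i => p.2 i + q.2 i)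
      = (εz * p.1 + thetaF J α εz p.2) + (εz * q.1 + thetaF J α εz q.2)
        + om J (α p.2) (α q.2)
    rw [hθ]
    ring
  · exact hα_add p.2 q.2



end WithHyp

section Maps

def fsucc (hn : 0 < n) (i : Fin n) : Fin n :=
  if h : (i:ℕ) + 1 < n then ⟨(i:ℕ)+1, h⟩ else ⟨0, hn⟩

def rho (hn : 0 < n) (i : Fin n) : Fin n :=
  if (i:ℕ) = 0 then ⟨n-1, by omega⟩ else ⟨(i:ℕ)-1, by omega⟩

def rhob (hn : 0 < n) (i : Fin n) : Fin n :=
  if h : (i:ℕ) = 0 then ⟨0, hn⟩ else ⟨n - (i:ℕ), by omega⟩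

lemma rhob_val (hn : 0 < n) (i : Fin n) :
    ((rhob hn i) : ℕ) = if (i:ℕ) = 0 then 0 else n - (i:ℕ) := by
  unfold rhob
  by_cases h : (i:ℕ) = 0
  · rw [dif_pos h, if_pos h]
  · rw [dif_neg h, if_neg h]

def sg (i : Fin n) : ZMod 3 := if (i:ℕ) = 0 then -1 else 1

def sigmaE (hn : 0 < n) (e : Fin n → ZMod 3) : Fin n → ZMod 3 :=
  fun i => sg i * e (rho hn i)

def tauE (hn : 0 < n) (e : Fin n → ZMod 3) : Fin n → ZMod 3 :=
  fun i => sg i * e (rhob hn i)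

lemma rho_fsucc (hn : 0 < n) (i : Fin n) : rho hn (fsucc hn i) = i := by
  unfold fsucc rho
  by_cases h : (i:ℕ)+1 < n
  · rw [dif_pos h]
    have : ((⟨(i:ℕ)+1, h⟩ : Fin n) : ℕ) ≠ 0 := by simp
    rw [if_neg this]
    apply Fin.ext
    simp
  · rw [dif_neg h]
    rw [if_pos rfl]
    apply Fin.ext
    have := i.isLt
    simp
    omega

lemma fsucc_inj (hn : 0 < n) : Function.Injective (fsucc hn) :=
  Function.LeftInverse.injective (rho_fsucc hn)

lemma fsucc_bij (hn : 0 < n) : Function.Bijective (fsucc hn) :=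
  Finite.injective_iff_bijective.mp (fsucc_inj hn)

lemma rhob_invol (hn : 0 < n) : Function.Involutive (rhob hn) := by
  intro i
  apply Fin.ext
  rw [rhob_val, rhob_val]
  have := i.isLt
  split_ifs <;> omega

lemma rhob_bij (hn : 0 < n) : Function.Bijective (rhob hn) :=
  (rhob_invol hn).bijective

lemma rhob_zero_iff (hn : 0 < n) (i : Fin n) : ((rhob hn i : Fin n) : ℕ) = 0 ↔ (i:ℕ) = 0 := by
  rw [rhob_val]
  have := i.isLt
  split_ifs <;> omega

lemma sg_rhob (hn : 0 < n) (i : Fin n) : sg (rhob hn i) = sg i := by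
  unfold sg
  by_cases h : (i:ℕ) = 0
  · rw [if_pos ((rhob_zero_iff hn i).mpr h), if_pos h]
  · rw [if_neg (fun hh => h ((rhob_zero_iff hn i).mp hh)), if_neg h]

lemma sigmaE_add (hn : 0 < n) (e e' : Fin n → ZMod 3) :
    sigmaE hn (fun i => e i + e' i) = fun i => sigmaE hn e i + sigmaE hn e' i := by
  funext i
  unfold sigmaE
  ring

lemma tauE_add (hn : 0 < n) (e e' : Fin n → ZMod 3) :
    tauE hn (fun i => e i + e' i) = fun i => tauE hn e i + tauE hn e' i := by
  funext i
  unfold tauE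
  ring

lemma sg_sq (i : Fin n) : sg i * sg i = 1 := by
  unfold sg
  by_cases h : (i:ℕ) = 0 <;> simp [h]

lemma sigmaE_inj (hn : 0 < n) : Function.Injective (sigmaE hn) := by
  intro e e' h
  funext i
  have h2 := congrFun h (fsucc hn i)
  unfold sigmaE at h2
  rw [rho_fsucc] at h2
  have h3 := congrArg (fun x => sg (fsucc hn i) * x) h2
  simpa [← mul_assoc, sg_sq] using h3

lemma tauE_inj (hn : 0 < n) : Function.Injective (tauE hn) := by
  intro e e' h
  funext i
  have h2 := congrFun h (rhob hn i)
  unfold tauE at h2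
  rw [rhob_invol] at h2
  have h3 := congrArg (fun x => sg (rhob hn i) * x) h2
  simpa [← mul_assoc, sg_sq] using h3



lemma fsucc_val (hn : 0 < n) (i : Fin n) :
    ((fsucc hn i) : ℕ) = if (i:ℕ) + 1 < n then (i:ℕ) + 1 else 0 := by
  unfold fsucc
  by_cases h : (i:ℕ) + 1 < n
  · rw [dif_pos h, if_pos h]
  · rw [dif_neg h, if_neg h]

lemma npow_par (a b : ℕ) (h : a % 2 = b % 2) : (-1:ℤ)^a = (-1:ℤ)^b := by
  rw [← Nat.div_add_mod a 2, ← Nat.div_add_mod b 2, pow_add, pow_add, pow_mul, pow_mul]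
  norm_num [h]

end Maps

section MI
variable {n : ℕ}

lemma MIZ (hn : 0 < n) (hnev : n % 2 = 0) (J : Fin n → Fin n → ℤ)
    (hJ : ∀ i j : Fin n, J i j =
      if (j : ℕ) < (i : ℕ) then (-1 : ℤ) ^ ((i : ℕ) - (j : ℕ))
      else if (i : ℕ) < (j : ℕ) then -(-1 : ℤ) ^ ((j : ℕ) - (i : ℕ))
      else 0) (i j : Fin n) :
    (if ((fsucc hn i) : ℕ) = 0 then (-1:ℤ) else 1) *
      (if ((fsucc hn j) : ℕ) = 0 then (-1:ℤ) else 1) *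
      J (fsucc hn i) (fsucc hn j) = J i j := by
  have hi := i.isLt
  have hj := j.isLt
  rw [hJ (fsucc hn i) (fsucc hn j), hJ i j, fsucc_val, fsucc_val]
  by_cases h1 : (i:ℕ) + 1 < n <;> by_cases h2 : (j:ℕ) + 1 < n
  · rw [if_pos h1, if_pos h2, if_neg (by omega : ¬ (i:ℕ)+1 = 0),
      if_neg (by omega : ¬ (j:ℕ)+1 = 0)]
    rcases lt_trichotomy (j:ℕ) (i:ℕ) with h | h | h
    · rw [if_pos (by omega : (j:ℕ)+1 < (i:ℕ)+1), if_pos h,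
        show (i:ℕ)+1 - ((j:ℕ)+1) = (i:ℕ) - (j:ℕ) by omega]
      ring
    · rw [if_neg (by omega : ¬ (j:ℕ)+1 < (i:ℕ)+1), if_neg (by omega : ¬ (i:ℕ)+1 < (j:ℕ)+1),
        if_neg (by omega : ¬ (j:ℕ) < (i:ℕ)), if_neg (by omega : ¬ (i:ℕ) < (j:ℕ))]
      ring
    · rw [if_neg (by omega : ¬ (j:ℕ)+1 < (i:ℕ)+1), if_pos (by omega : (i:ℕ)+1 < (j:ℕ)+1),
        if_neg (by omega : ¬ (j:ℕ) < (i:ℕ)), if_pos h,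
        show (j:ℕ)+1 - ((i:ℕ)+1) = (j:ℕ) - (i:ℕ) by omega]
      ring
  · rw [if_pos h1, if_neg h2, if_neg (by omega : ¬ (i:ℕ)+1 = 0), if_pos rfl,
      if_pos (by omega : 0 < (i:ℕ)+1), if_neg (by omega : ¬ (j:ℕ) < (i:ℕ)),
      if_pos (by omega : (i:ℕ) < (j:ℕ))]
    have hp : (-1:ℤ)^((i:ℕ)+1-0) = (-1:ℤ)^((j:ℕ)-(i:ℕ)) := npow_par _ _ (by omega)
    rw [hp]
    ring
  · rw [if_neg h1, if_pos h2, if_pos rfl, if_neg (by omega : ¬ (j:ℕ)+1 = 0),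
      if_neg (by omega : ¬ (j:ℕ)+1 < 0), if_pos (by omega : 0 < (j:ℕ)+1),
      if_pos (by omega : (j:ℕ) < (i:ℕ))]
    have hp : (-1:ℤ)^((j:ℕ)+1-0) = (-1:ℤ)^((i:ℕ)-(j:ℕ)) := npow_par _ _ (by omega)
    rw [hp]
    ring
  · rw [if_neg h1, if_neg h2, if_pos rfl,
      if_neg (by omega : ¬ (0:ℕ) < 0), if_neg (by omega : ¬ (0:ℕ) < 0),
      if_neg (by omega : ¬ (j:ℕ) < (i:ℕ)), if_neg (by omega : ¬ (i:ℕ) < (j:ℕ))]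
    ring

lemma MIbZ (hn : 0 < n) (hnev : n % 2 = 0) (J : Fin n → Fin n → ℤ)
    (hJ : ∀ i j : Fin n, J i j =
      if (j : ℕ) < (i : ℕ) then (-1 : ℤ) ^ ((i : ℕ) - (j : ℕ))
      else if (i : ℕ) < (j : ℕ) then -(-1 : ℤ) ^ ((j : ℕ) - (i : ℕ))
      else 0) (i j : Fin n) :
    (if (i : ℕ) = 0 then (-1:ℤ) else 1) * (if (j : ℕ) = 0 then (-1:ℤ) else 1) *
      J (rhob hn i) (rhob hn j) = - J i j := by
  have hi := i.isLt
  have hj := j.isLt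
  rw [hJ (rhob hn i) (rhob hn j), hJ i j, rhob_val, rhob_val]
  by_cases h1 : (i:ℕ) = 0 <;> by_cases h2 : (j:ℕ) = 0
  · rw [if_pos h1, if_pos h2, if_pos h1, if_pos h2,
      if_neg (by omega : ¬ (0:ℕ) < 0), if_neg (by omega : ¬ (0:ℕ) < 0),
      if_neg (by omega : ¬ (j:ℕ) < (i:ℕ)), if_neg (by omega : ¬ (i:ℕ) < (j:ℕ))]
    ring
  · rw [if_pos h1, if_neg h2, if_pos h1, if_neg h2,
      if_neg (by omega : ¬ n - (j:ℕ) < 0), if_pos (by omega : 0 < n - (j:ℕ)),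
      if_neg (by omega : ¬ (j:ℕ) < (i:ℕ)), if_pos (by omega : (i:ℕ) < (j:ℕ))]
    have hp : (-1:ℤ)^(n-(j:ℕ)-0) = (-1:ℤ)^((j:ℕ)-(i:ℕ)) := npow_par _ _ (by omega)
    rw [hp]
    ring
  · rw [if_neg h1, if_pos h2, if_neg h1, if_pos h2,
      if_pos (by omega : (0:ℕ) < n - (i:ℕ)),
      if_pos (by omega : (j:ℕ) < (i:ℕ))]
    have hp : (-1:ℤ)^(n-(i:ℕ)-0) = (-1:ℤ)^((i:ℕ)-(j:ℕ)) := npow_par _ _ (by omega)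
    rw [hp]
    ring
  · rw [if_neg h1, if_neg h2, if_neg h1, if_neg h2]
    rcases lt_trichotomy (j:ℕ) (i:ℕ) with h | h | h
    · rw [if_neg (by omega : ¬ n - (j:ℕ) < n - (i:ℕ)),
        if_pos (by omega : n - (i:ℕ) < n - (j:ℕ)), if_pos h,
        show n - (j:ℕ) - (n - (i:ℕ)) = (i:ℕ) - (j:ℕ) by omega]
      ring
    · rw [if_neg (by omega : ¬ n - (j:ℕ) < n - (i:ℕ)),
        if_neg (by omega : ¬ n - (i:ℕ) < n - (j:ℕ)),
        if_neg (by omega : ¬ (j:ℕ) < (i:ℕ)), if_neg (by omega : ¬ (i:ℕ) < (j:ℕ))]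
      ring
    · rw [if_pos (by omega : n - (j:ℕ) < n - (i:ℕ)), if_neg (by omega : ¬ (j:ℕ) < (i:ℕ)),
        if_pos h, show n - (i:ℕ) - (n - (j:ℕ)) = (j:ℕ) - (i:ℕ) by omega]
      ring



end MI

section Forms
variable {n : ℕ}

def Azf (J : Fin n → Fin n → ℤ) (e f : Fin n → ZMod 3) : ZMod 3 :=
  ∑ i : Fin n, ∑ j : Fin n, e i * f j * Jz J i j

variable (J : Fin n → Fin n → ℤ)

lemma Jz_diag (hJ : ∀ i j : Fin n, J i j =
      if (j : ℕ) < (i : ℕ) then (-1 : ℤ) ^ ((i : ℕ) - (j : ℕ))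
      else if (i : ℕ) < (j : ℕ) then -(-1 : ℤ) ^ ((j : ℕ) - (i : ℕ))
      else 0) (i : Fin n) : Jz J i i = 0 := by
  unfold Jz
  rw [hJ i i, if_neg (by omega), if_neg (by omega)]
  norm_num

lemma Jz_anti (hJ : ∀ i j : Fin n, J i j =
      if (j : ℕ) < (i : ℕ) then (-1 : ℤ) ^ ((i : ℕ) - (j : ℕ))
      else if (i : ℕ) < (j : ℕ) then -(-1 : ℤ) ^ ((j : ℕ) - (i : ℕ))
      else 0) (i j : Fin n) : Jz J j i = - Jz J i j := by
  unfold Jz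
  rw [hJ j i, hJ i j]
  rcases lt_trichotomy (j:ℕ) (i:ℕ) with h | h | h
  · rw [if_neg (by omega : ¬ (i:ℕ) < (j:ℕ)), if_pos h, if_pos h]
    push_cast
    ring
  · rw [if_neg (by omega : ¬ (i:ℕ) < (j:ℕ)), if_neg (by omega : ¬ (j:ℕ) < (i:ℕ)),
      if_neg (by omega : ¬ (j:ℕ) < (i:ℕ)), if_neg (by omega : ¬ (i:ℕ) < (j:ℕ))]
    norm_num
  · rw [if_pos h, if_neg (by omega : ¬ (j:ℕ) < (i:ℕ)), if_pos h]
    push_cast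
    ring

lemma om_expand (g f : Fin n → ZMod 3) :
    om J g f = ∑ i : Fin n, ∑ j : Fin n,
      (if (j:ℕ) < (i:ℕ) then g i * f j * Jz J i j else 0) := by
  calc om J g f = ∑ j : Fin n, ∑ i : Fin n,
      (if (j:ℕ) < (i:ℕ) then g i * f j * Jz J i j else 0) := by
        refine Finset.sum_congr rfl fun j _ => ?_
        rw [TT, Finset.mul_sum]
        refine Finset.sum_congr rfl fun i _ => ?_
        by_cases h : (j:ℕ) < (i:ℕ)
        · rw [if_pos h, if_pos h]; ring
        · rw [if_neg h, if_neg h]; ring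
    _ = _ := Finset.sum_comm

lemma Azf_om (hJ : ∀ i j : Fin n, J i j =
      if (j : ℕ) < (i : ℕ) then (-1 : ℤ) ^ ((i : ℕ) - (j : ℕ))
      else if (i : ℕ) < (j : ℕ) then -(-1 : ℤ) ^ ((j : ℕ) - (i : ℕ))
      else 0) (e f : Fin n → ZMod 3) : Azf J e f = om J e f - om J f e := by
  have hswap : om J f e = ∑ i : Fin n, ∑ j : Fin n,
      (if (i:ℕ) < (j:ℕ) then - (e i * f j * Jz J i j) else 0) := by
    rw [om_expand]
    rw [Finset.sum_comm]
    refine Finset.sum_congr rfl fun i _ => Finset.sum_congr rfl fun j _ => ?_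
    by_cases h : (i:ℕ) < (j:ℕ)
    · rw [if_pos h, if_pos h, Jz_anti J hJ i j]
      ring
    · rw [if_neg h, if_neg h]
  rw [om_expand, hswap, Azf, ← Finset.sum_sub_distrib]
  refine Finset.sum_congr rfl fun i _ => ?_
  rw [← Finset.sum_sub_distrib]
  refine Finset.sum_congr rfl fun j _ => ?_
  rcases lt_trichotomy (j:ℕ) (i:ℕ) with h | h | h
  · rw [if_pos h, if_neg (by omega)]
    ring
  · rw [if_neg (by omega), if_neg (by omega)]
    have : i = j := Fin.ext h.symm  -- h : (j:ℕ) = (i:ℕ)? careful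
    rw [this, Jz_diag J hJ]
    ring
  · rw [if_neg (by omega), if_pos h]
    ring

lemma sum_reindex (φ : Fin n → Fin n) (hφ : Function.Bijective φ)
    (G : Fin n → Fin n → ZMod 3) :
    ∑ i : Fin n, ∑ j : Fin n, G (φ i) (φ j) = ∑ i : Fin n, ∑ j : Fin n, G i j := by
  calc ∑ i : Fin n, ∑ j : Fin n, G (φ i) (φ j)
      = ∑ i : Fin n, ∑ j : Fin n, G (φ i) j := by
        refine Finset.sum_congr rfl fun i _ => ?_
        exact Function.Bijective.sum_comp hφ (fun j => G (φ i) j)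
    _ = ∑ i : Fin n, ∑ j : Fin n, G i j :=
        Function.Bijective.sum_comp hφ (fun i => ∑ j, G i j)

lemma MI3 (hn : 0 < n) (hnev : n % 2 = 0)
    (hJ : ∀ i j : Fin n, J i j =
      if (j : ℕ) < (i : ℕ) then (-1 : ℤ) ^ ((i : ℕ) - (j : ℕ))
      else if (i : ℕ) < (j : ℕ) then -(-1 : ℤ) ^ ((j : ℕ) - (i : ℕ))
      else 0) (i j : Fin n) :
    sg (fsucc hn i) * sg (fsucc hn j) * Jz J (fsucc hn i) (fsucc hn j) = Jz J i j := by
  have h := MIZ hn hnev J hJ i j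
  have h2 := congrArg (fun t : ℤ => ((t : ZMod 3))) h
  simp only [Int.cast_mul, Int.cast_ite, Int.cast_neg, Int.cast_one] at h2
  unfold sg Jz
  exact h2

lemma MIb3 (hn : 0 < n) (hnev : n % 2 = 0)
    (hJ : ∀ i j : Fin n, J i j =
      if (j : ℕ) < (i : ℕ) then (-1 : ℤ) ^ ((i : ℕ) - (j : ℕ))
      else if (i : ℕ) < (j : ℕ) then -(-1 : ℤ) ^ ((j : ℕ) - (i : ℕ))
      else 0) (i j : Fin n) :
    sg i * sg j * Jz J (rhob hn i) (rhob hn j) = - Jz J i j := by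
  have h := MIbZ hn hnev J hJ i j
  have h2 := congrArg (fun t : ℤ => ((t : ZMod 3))) h
  simp only [Int.cast_mul, Int.cast_ite, Int.cast_neg, Int.cast_one] at h2
  unfold sg Jz
  exact h2

lemma Azf_sigma (hn : 0 < n) (hnev : n % 2 = 0)
    (hJ : ∀ i j : Fin n, J i j =
      if (j : ℕ) < (i : ℕ) then (-1 : ℤ) ^ ((i : ℕ) - (j : ℕ))
      else if (i : ℕ) < (j : ℕ) then -(-1 : ℤ) ^ ((j : ℕ) - (i : ℕ))
      else 0) (e e' : Fin n → ZMod 3) :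
    Azf J (sigmaE hn e) (sigmaE hn e') = Azf J e e' := by
  unfold Azf
  rw [← sum_reindex (fsucc hn) (fsucc_bij hn)
    (fun a b => sigmaE hn e a * sigmaE hn e' b * Jz J a b)]
  refine Finset.sum_congr rfl fun i _ => Finset.sum_congr rfl fun j _ => ?_
  show sigmaE hn e (fsucc hn i) * sigmaE hn e' (fsucc hn j) *
      Jz J (fsucc hn i) (fsucc hn j) = e i * e' j * Jz J i j
  unfold sigmaE
  rw [rho_fsucc, rho_fsucc]
  linear_combination (e i * e' j) * MI3 J hn hnev hJ i j

lemma Azf_tau (hn : 0 < n) (hnev : n % 2 = 0)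
    (hJ : ∀ i j : Fin n, J i j =
      if (j : ℕ) < (i : ℕ) then (-1 : ℤ) ^ ((i : ℕ) - (j : ℕ))
      else if (i : ℕ) < (j : ℕ) then -(-1 : ℤ) ^ ((j : ℕ) - (i : ℕ))
      else 0) (e e' : Fin n → ZMod 3) :
    Azf J (tauE hn e) (tauE hn e') = - Azf J e e' := by
  unfold Azf
  rw [← sum_reindex (rhob hn) (rhob_bij hn)
    (fun a b => tauE hn e a * tauE hn e' b * Jz J a b)]
  rw [← Finset.sum_neg_distrib]
  refine Finset.sum_congr rfl fun i _ => ?_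
  rw [← Finset.sum_neg_distrib]
  refine Finset.sum_congr rfl fun j _ => ?_
  show tauE hn e (rhob hn i) * tauE hn e' (rhob hn j) *
      Jz J (rhob hn i) (rhob hn j) = -(e i * e' j * Jz J i j)
  unfold tauE
  rw [rhob_invol hn i, rhob_invol hn j, sg_rhob hn i, sg_rhob hn j]
  linear_combination (e i * e' j) * MIb3 J hn hnev hJ i j

lemma hS_sigma (hn : 0 < n) (hnev : n % 2 = 0)
    (hJ : ∀ i j : Fin n, J i j =
      if (j : ℕ) < (i : ℕ) then (-1 : ℤ) ^ ((i : ℕ) - (j : ℕ))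
      else if (i : ℕ) < (j : ℕ) then -(-1 : ℤ) ^ ((j : ℕ) - (i : ℕ))
      else 0) (e e' : Fin n → ZMod 3) :
    om J (sigmaE hn e) (sigmaE hn e') - 1 * om J e e'
      = om J (sigmaE hn e') (sigmaE hn e) - 1 * om J e' e := by
  linear_combination (Azf_om J hJ e e') - (Azf_om J hJ (sigmaE hn e) (sigmaE hn e'))
    + (Azf_sigma J hn hnev hJ e e')

lemma hS_tau (hn : 0 < n) (hnev : n % 2 = 0)
    (hJ : ∀ i j : Fin n, J i j =
      if (j : ℕ) < (i : ℕ) then (-1 : ℤ) ^ ((i : ℕ) - (j : ℕ))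
      else if (i : ℕ) < (j : ℕ) then -(-1 : ℤ) ^ ((j : ℕ) - (i : ℕ))
      else 0) (e e' : Fin n → ZMod 3) :
    om J (tauE hn e) (tauE hn e') - (-1) * om J e e'
      = om J (tauE hn e') (tauE hn e) - (-1) * om J e' e := by
  linear_combination - (Azf_om J hJ (tauE hn e) (tauE hn e')) - (Azf_om J hJ e e')
    + (Azf_tau J hn hnev hJ e e')



end Forms

section SingLemmas
variable {n : ℕ} (J : Fin n → Fin n → ℤ)

lemma om_sing_self (a : Fin n) (t t' : ZMod 3) : om J (sing a t) (sing a t') = 0 := by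
  unfold om
  rw [Finset.sum_eq_single a (fun j _ hj => by simp [sing, hj])
    (fun h => absurd (Finset.mem_univ a) h)]
  have hTT : TT J (sing a t) a = 0 := Finset.sum_eq_zero fun i _ => by
    by_cases h : (a:ℕ) < (i:ℕ)
    · have hne : i ≠ a := by intro e; subst e; omega
      simp [h, sing, hne]
    · simp [h]
  rw [hTT, mul_zero]

lemma om_zero_zero : om J (fun _ => (0:ZMod 3)) (fun _ => (0:ZMod 3)) = 0 := by
  unfold om
  exact Finset.sum_eq_zero fun j _ => by rw [zero_mul]

lemma fsucc_rho (hn : 0 < n) (i : Fin n) : fsucc hn (rho hn i) = i := by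
  obtain ⟨k, rfl⟩ := (fsucc_bij hn).surjective i
  rw [rho_fsucc]

lemma sigmaE_sing (hn : 0 < n) (j : Fin n) (t : ZMod 3) :
    sigmaE hn (sing j t) = sing (fsucc hn j) (sg (fsucc hn j) * t) := by
  funext i
  unfold sigmaE sing
  by_cases hi : i = fsucc hn j
  · subst hi
    rw [if_pos (rho_fsucc hn j), if_pos rfl]
  · have : rho hn i ≠ j := by
      intro h
      exact hi (by rw [← h, fsucc_rho])
    rw [if_neg this, if_neg hi, mul_zero]

lemma tauE_sing (hn : 0 < n) (j : Fin n) (t : ZMod 3) :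
    tauE hn (sing j t) = sing (rhob hn j) (sg j * t) := by
  funext i
  unfold tauE sing
  by_cases hi : i = rhob hn j
  · subst hi
    rw [if_pos (rhob_invol hn j), if_pos rfl, sg_rhob]
  · have : rhob hn i ≠ j := by
      intro h
      exact hi (by rw [← h, rhob_invol])
    rw [if_neg this, if_neg hi, mul_zero]

lemma sigmaE_zero (hn : 0 < n) : sigmaE hn (fun _ => (0:ZMod 3)) = fun _ => (0:ZMod 3) := by
  funext i
  unfold sigmaE
  rw [mul_zero]

lemma tauE_zero (hn : 0 < n) : tauE hn (fun _ => (0:ZMod 3)) = fun _ => (0:ZMod 3) := by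
  funext i
  unfold tauE
  rw [mul_zero]

lemma thetaF_sigma_sing (hn : 0 < n) (εz : ZMod 3) (j : Fin n) (t : ZMod 3) :
    thetaF J (sigmaE hn) εz (sing j t) = 0 := by
  unfold thetaF
  rw [sigmaE_sing, om_sing_self, om_sing_self]
  ring

lemma thetaF_tau_sing (hn : 0 < n) (εz : ZMod 3) (j : Fin n) (t : ZMod 3) :
    thetaF J (tauE hn) εz (sing j t) = 0 := by
  unfold thetaF
  rw [tauE_sing, om_sing_self, om_sing_self]
  ring

lemma thetaF_sigma_zero (hn : 0 < n) (εz : ZMod 3) :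
    thetaF J (sigmaE hn) εz (fun _ => (0:ZMod 3)) = 0 := by
  unfold thetaF
  rw [sigmaE_zero, om_zero_zero]
  ring

lemma thetaF_tau_zero (hn : 0 < n) (εz : ZMod 3) :
    thetaF J (tauE hn) εz (fun _ => (0:ZMod 3)) = 0 := by
  unfold thetaF
  rw [tauE_zero, om_zero_zero]
  ring

end SingLemmas

section MoreV
variable {V : Type*} [Group V] {n : ℕ} (v : Fin n → V) (z : V)

lemma Phi_v_neg (hv3 : ∀ i, v i ^ 3 = 1) (i : Fin n) :
    Phi v z (0, sing i (-1)) = (v i)⁻¹ := by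
  show zeta z 0 * PP v (sing i (-1)) = (v i)⁻¹
  rw [zeta_zero, one_mul, PP_sing, nu_neg_one v hv3]

lemma Phi_z_neg (hz3 : z ^ 3 = 1) : Phi v z (-1, fun _ => 0) = z⁻¹ := by
  show zeta z (-1) * PP v (fun _ => 0) = z⁻¹
  rw [show PP v (fun _ => (0:ZMod 3)) = 1 from Pl_zero v _, mul_one]
  show z ^ ((-1 : ZMod 3)).val = z⁻¹
  rw [show ((-1 : ZMod 3)).val = 2 from rfl]
  have h2 : z * z ^ 2 = 1 := by rw [← pow_succ']; exact hz3
  exact (inv_eq_of_mul_eq_one_right h2).symm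

lemma aut_ext (hgen : Subgroup.closure (Set.range v ∪ {z}) = ⊤) (f g : MulAut V)
    (hfv : ∀ i, f (v i) = g (v i)) (hfz : f z = g z) : f = g := by
  have : ∀ x : V, f x = g x := by
    intro x
    have hx : x ∈ Subgroup.closure (Set.range v ∪ {z}) := by rw [hgen]; trivial
    induction hx using Subgroup.closure_induction with
    | mem y hy =>
      rcases hy with ⟨i, rfl⟩ | hy2
      · exact hfv i
      · rw [Set.mem_singleton_iff] at hy2
        rw [hy2]
        exact hfz
    | one => rw [map_one, map_one]
    | mul x y hx hy ihx ihy => rw [map_mul, map_mul, ihx, ihy]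
    | inv x hx ih => rw [map_inv, map_inv, ih]
  exact MulEquiv.ext this

end MoreV
end Stmt16Aux

open Stmt16Aux in
/-- The maps `a` and `b` on the generators of the extraspecial group `V` of exponent 3
and order `3^(2^m + 1)` extend to automorphisms, with `a` of order `2^(m+1)`, `b` of
order 2, `bab = a⁻¹`, so that `⟨a,b⟩` is dihedral of order `2^(m+2)`.
(Generators are indexed by `Fin (2^m)`, i.e. `v i` corresponds to `v_{i+1}` of the paper.) -/
theorem stmt16 (m : ℕ) (hm : 1 ≤ m) (V : Type*) [Group V] [Fintype V]
    (v : Fin (2 ^ m) → V) (z : V)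
    (J : Fin (2 ^ m) → Fin (2 ^ m) → ℤ)
    (hJ : ∀ i j : Fin (2 ^ m), J i j =
      if (j : ℕ) < (i : ℕ) then (-1 : ℤ) ^ ((i : ℕ) - (j : ℕ))
      else if (i : ℕ) < (j : ℕ) then -(-1 : ℤ) ^ ((j : ℕ) - (i : ℕ))
      else 0)
    (hv3 : ∀ i, (v i) ^ 3 = 1) (hz3 : z ^ 3 = 1)
    (hvz : ∀ i, v i * z = z * v i)
    (hcomm : ∀ i j, (v i)⁻¹ * (v j)⁻¹ * v i * v j = z ^ (J i j))
    (hgen : Subgroup.closure (Set.range v ∪ {z}) = ⊤)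
    (hcard : Nat.card V = 3 ^ (2 ^ m + 1)) :
    ∃ a b : MulAut V,
      (∀ i : Fin (2 ^ m), a (v i) =
        if h : (i : ℕ) + 1 < 2 ^ m then v ⟨(i : ℕ) + 1, h⟩
        else (v ⟨0, Nat.two_pow_pos m⟩)⁻¹) ∧
      a z = z ∧ orderOf a = 2 ^ (m + 1) ∧
      (∀ i : Fin (2 ^ m), b (v i) =
        if h : (i : ℕ) = 0 then (v ⟨0, Nat.two_pow_pos m⟩)⁻¹
        else v ⟨2 ^ m - (i : ℕ), by have := i.isLt; omega⟩) ∧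
      b z = z⁻¹ ∧ orderOf b = 2 ∧ b * a * b = a⁻¹ ∧
      Nat.card ↥(Subgroup.closure ({a, b} : Set (MulAut V))) = 2 ^ (m + 2) ∧
      Nonempty (↥(Subgroup.closure ({a, b} : Set (MulAut V))) ≃*
        DihedralGroup (2 ^ (m + 1))) := by
  classical
  have hn : 0 < 2 ^ m := Nat.two_pow_pos m
  have hn2 : 2 ≤ 2 ^ m := by
    calc 2 = 2 ^ 1 := (pow_one 2).symm
    _ ≤ 2 ^ m := Nat.pow_le_pow_right (by norm_num) hm
  have hnev : 2 ^ m % 2 = 0 := by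
    have h2 : 2 ^ m = 2 * 2 ^ (m - 1) := by
      rw [← pow_succ']
      congr 1
      omega
    omega
  have zc : ∀ g : V, Commute z g := zcomm v z hvz hgen
  have hbij := Phi_bij v z J hv3 hz3 zc hcomm hgen hcard
  obtain ⟨a, ha⟩ := mkAut v z J hv3 hz3 zc hcomm hgen hcard
    (sigmaE hn) 1 (sigmaE_add hn) (sigmaE_inj hn) (Or.inl rfl) (hS_sigma J hn hnev hJ)
  obtain ⟨b, hb⟩ := mkAut v z J hv3 hz3 zc hcomm hgen hcard
    (tauE hn) (-1) (tauE_add hn) (tauE_inj hn) (Or.inr rfl) (hS_tau J hn hnev hJ)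
  -- action of a on generators
  have hav_sing : ∀ (i : Fin (2^m)) (t : ZMod 3), a (Phi v z (0, sing i t)) =
      Phi v z (0, sing (fsucc hn i) (sg (fsucc hn i) * t)) := by
    intro i t
    have h1 : a (Phi v z (0, sing i t)) =
        Phi v z (1 * 0 + thetaF J (sigmaE hn) 1 (sing i t), sigmaE hn (sing i t)) :=
      ha (0, sing i t)
    rw [h1, sigmaE_sing hn i t,
      show (1 : ZMod 3) * 0 + thetaF J (sigmaE hn) 1 (sing i t) = 0 by
        rw [thetaF_sigma_sing]; ring]
  have haz : a z = z := by
    have h1 : a (Phi v z (1, fun _ => 0)) =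
        Phi v z (1 * 1 + thetaF J (sigmaE hn) 1 (fun _ => 0),
          sigmaE hn (fun _ => 0)) := ha (1, fun _ => 0)
    rw [sigmaE_zero hn,
      show (1 : ZMod 3) * 1 + thetaF J (sigmaE hn) 1 (fun _ => 0) = 1 by
        rw [thetaF_sigma_zero]; ring] at h1
    rw [Phi_z v z] at h1
    exact h1
  have hav : ∀ i : Fin (2^m), a (v i) =
      if h : (i : ℕ) + 1 < 2 ^ m then v ⟨(i : ℕ) + 1, h⟩
      else (v ⟨0, hn⟩)⁻¹ := by
    intro i
    have hs := hav_sing i 1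
    rw [Phi_v v z i] at hs
    by_cases h : (i:ℕ) + 1 < 2^m
    · rw [dif_pos h]
      have hfs : fsucc hn i = ⟨(i:ℕ)+1, h⟩ := by unfold fsucc; rw [dif_pos h]
      have hsg : sg (⟨(i:ℕ)+1, h⟩ : Fin (2^m)) = 1 := by
        unfold sg; rw [if_neg (by simp)]
      rw [hfs, hsg, one_mul] at hs
      exact hs.trans (Phi_v v z _)
    · rw [dif_neg h]
      have hfs : fsucc hn i = ⟨0, hn⟩ := by unfold fsucc; rw [dif_neg h]
      have hsg : sg (⟨0, hn⟩ : Fin (2^m)) = -1 := by unfold sg; rw [if_pos rfl]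
      rw [hfs, hsg, show ((-1 : ZMod 3)) * 1 = -1 by ring] at hs
      exact hs.trans (Phi_v_neg v z hv3 _)
  -- action of b on generators
  have hbv_sing : ∀ (i : Fin (2^m)) (t : ZMod 3), b (Phi v z (0, sing i t)) =
      Phi v z (0, sing (rhob hn i) (sg i * t)) := by
    intro i t
    have h1 : b (Phi v z (0, sing i t)) =
        Phi v z ((-1) * 0 + thetaF J (tauE hn) (-1) (sing i t), tauE hn (sing i t)) :=
      hb (0, sing i t)
    rw [h1, tauE_sing hn i t,
      show ((-1 : ZMod 3)) * 0 + thetaF J (tauE hn) (-1) (sing i t) = 0 by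
        rw [thetaF_tau_sing]; ring]
  have hbz : b z = z⁻¹ := by
    have h1 : b (Phi v z (1, fun _ => 0)) =
        Phi v z ((-1) * 1 + thetaF J (tauE hn) (-1) (fun _ => 0),
          tauE hn (fun _ => 0)) := hb (1, fun _ => 0)
    rw [tauE_zero hn,
      show ((-1 : ZMod 3)) * 1 + thetaF J (tauE hn) (-1) (fun _ => 0) = -1 by
        rw [thetaF_tau_zero]; ring] at h1
    rw [Phi_z v z, Phi_z_neg v z hz3] at h1
    exact h1
  have hbv : ∀ i : Fin (2^m), b (v i) =
      if h : (i : ℕ) = 0 then (v ⟨0, hn⟩)⁻¹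
      else v ⟨2 ^ m - (i : ℕ), by have := i.isLt; omega⟩ := by
    intro i
    have hs := hbv_sing i 1
    rw [Phi_v v z i] at hs
    by_cases h : (i:ℕ) = 0
    · rw [dif_pos h]
      have hr : rhob hn i = ⟨0, hn⟩ := by unfold rhob; rw [dif_pos h]
      have hsg : sg i = -1 := by unfold sg; rw [if_pos h]
      rw [hr, hsg, show ((-1 : ZMod 3)) * 1 = -1 by ring] at hs
      exact hs.trans (Phi_v_neg v z hv3 _)
    · rw [dif_neg h]
      have hr : rhob hn i = ⟨2^m - (i:ℕ), by have := i.isLt; omega⟩ := by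
        unfold rhob; rw [dif_neg h]
      have hsg : sg i = 1 := by unfold sg; rw [if_neg h]
      rw [hr, hsg, one_mul] at hs
      exact hs.trans (Phi_v v z _)
  -- distinctness facts
  have hvne : ∀ i : Fin (2^m), v i ≠ (v i)⁻¹ := by
    intro i h
    have h1 : Phi v z (0, sing i 1) = Phi v z (0, sing i (-1)) := by
      rw [Phi_v v z i, Phi_v_neg v z hv3 i]; exact h
    have h2 := hbij.injective h1
    have h3 : (1 : ZMod 3) = -1 := by
      have h4 := congrFun (congrArg Prod.snd h2) i
      simpa [sing] using h4
    exact absurd h3 (by decide)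
  have hzne : z ≠ z⁻¹ := by
    intro h
    have h1 : Phi v z (1, fun _ => 0) = Phi v z (-1, fun _ => 0) := by
      rw [Phi_z v z, Phi_z_neg v z hz3]; exact h
    have h3 : (1 : ZMod 3) = -1 := congrArg Prod.fst (hbij.injective h1)
    exact absurd h3 (by decide)
  -- powers of a
  have hazk : ∀ k : ℕ, (a ^ k) z = z := by
    intro k
    induction k with
    | zero => rw [pow_zero]; rfl
    | succ k ih => rw [pow_succ, MulAut.mul_apply, haz, ih]
  have hcycle : ∀ k : ℕ, k ≤ 2^m → ∀ i : Fin (2^m),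
      (∀ (hlt : (i:ℕ) + k < 2^m), (a ^ k) (v i) = v ⟨(i:ℕ) + k, hlt⟩) ∧
      (∀ (hge : 2^m ≤ (i:ℕ) + k) (hlt2 : (i:ℕ) + k - 2^m < 2^m),
        (a ^ k) (v i) = (v ⟨(i:ℕ) + k - 2^m, hlt2⟩)⁻¹) := by
    intro k
    induction k with
    | zero =>
      intro _ i
      constructor
      · intro hlt
        rw [pow_zero, MulAut.one_apply]
        exact congrArg v (Fin.ext (by simp))
      · intro hge hlt2
        exfalso
        have := i.isLt
        omega
    | succ k ih =>
      intro hk i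
      obtain ⟨ih1, ih2⟩ := ih (by omega) i
      constructor
      · intro hlt
        rw [pow_succ', MulAut.mul_apply, ih1 (by omega), hav,
          dif_pos (show (i:ℕ)+k+1 < 2^m by omega)]
        exact congrArg v (Fin.ext (by simp [Nat.add_assoc]))
      · intro hge hlt2
        rw [pow_succ', MulAut.mul_apply]
        by_cases hc : (i:ℕ) + k < 2^m
        · rw [ih1 hc, hav, dif_neg (show ¬((i:ℕ)+k+1 < 2^m) by omega)]
          congr 2
          apply Fin.ext
          show (0:ℕ) = (i:ℕ)+(k+1) - 2^m
          omega
        · rw [ih2 (by omega) (by have := i.isLt; omega), map_inv, hav,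
            dif_pos (show (i:ℕ)+k-2^m+1 < 2^m by have := i.isLt; omega)]
          congr 2
          apply Fin.ext
          show (i:ℕ)+k-2^m+1 = (i:ℕ)+(k+1)-2^m
          omega
  have han : ∀ i : Fin (2^m), (a ^ (2^m)) (v i) = (v i)⁻¹ := by
    intro i
    rw [(hcycle (2^m) le_rfl i).2 (by omega) (by have := i.isLt; omega)]
    congr 2
    apply Fin.ext
    show (i:ℕ) + 2^m - 2^m = (i:ℕ)
    omega
  have ha2n : a ^ (2^(m+1)) = 1 := by
    apply aut_ext v z hgen
    · intro i
      rw [show (2:ℕ)^(m+1) = 2^m + 2^m by rw [pow_succ]; ring, pow_add,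
        MulAut.mul_apply, han, map_inv, han, inv_inv, MulAut.one_apply]
    · rw [hazk, MulAut.one_apply]
  have hanot : a ^ (2^m) ≠ 1 := by
    intro h
    have h1 := han ⟨0, hn⟩
    rw [h, MulAut.one_apply] at h1
    exact hvne ⟨0, hn⟩ h1
  have horda : orderOf a = 2^(m+1) := by
    have hdvd : orderOf a ∣ 2^(m+1) := orderOf_dvd_of_pow_eq_one ha2n
    obtain ⟨k, hk, hke⟩ := (Nat.dvd_prime_pow Nat.prime_two).mp hdvd
    rcases Nat.lt_or_ge k (m+1) with hlt | hge
    · exfalso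
      apply hanot
      have hdvd2 : orderOf a ∣ 2^m := by
        rw [hke]
        exact pow_dvd_pow 2 (by omega)
      exact orderOf_dvd_iff_pow_eq_one.mp hdvd2
    · rw [hke, show k = m+1 by omega]
  have hb2 : b * b = 1 := by
    apply aut_ext v z hgen
    · intro i
      rw [MulAut.mul_apply, hbv i, MulAut.one_apply]
      by_cases h : (i:ℕ) = 0
      · rw [dif_pos h, map_inv, hbv ⟨0, hn⟩, dif_pos rfl, inv_inv]
        congr 1
        apply Fin.ext
        show (0:ℕ) = (i:ℕ)
        omega
      · rw [dif_neg h, hbv]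
        rw [dif_neg (show ¬(2^m - (i:ℕ) = 0) by have := i.isLt; omega)]
        congr 1
        apply Fin.ext
        show 2^m - (2^m - (i:ℕ)) = (i:ℕ)
        have := i.isLt
        omega
    · rw [MulAut.mul_apply, hbz, map_inv, hbz, inv_inv, MulAut.one_apply]
  have hbne : b ≠ 1 := by
    intro h
    rw [h, MulAut.one_apply] at hbz
    exact hzne hbz
  have hordb : orderOf b = 2 := by
    haveI : Fact (Nat.Prime 2) := ⟨Nat.prime_two⟩
    exact orderOf_eq_prime (by rw [pow_two]; exact hb2) hbne
  have hbaba : (b * a) * (b * a) = 1 := by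
    apply aut_ext v z hgen
    · intro i
      rw [MulAut.mul_apply, MulAut.mul_apply, MulAut.mul_apply, MulAut.one_apply,
        hav i]
      by_cases hI : (i:ℕ) + 1 < 2^m
      · rw [dif_pos hI, hbv, dif_neg (show ¬((i:ℕ)+1 = 0) by omega), hav]
        by_cases hI0 : (i:ℕ) = 0
        · rw [dif_neg (show ¬(2^m - ((i:ℕ)+1) + 1 < 2^m) by omega),
            map_inv, hbv ⟨0, hn⟩, dif_pos rfl, inv_inv]
          congr 1
          apply Fin.ext
          show (0:ℕ) = (i:ℕ)
          omega
        · rw [dif_pos (show 2^m - ((i:ℕ)+1) + 1 < 2^m by have := i.isLt; omega), hbv,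
            dif_neg (show ¬(2^m - ((i:ℕ)+1) + 1 = 0) by have := i.isLt; omega)]
          congr 1
          apply Fin.ext
          show 2^m - (2^m - ((i:ℕ)+1) + 1) = (i:ℕ)
          have := i.isLt
          omega
      · rw [dif_neg hI, map_inv, hbv ⟨0, hn⟩, dif_pos rfl, inv_inv, hav ⟨0, hn⟩,
          dif_pos (show (0:ℕ)+1 < 2^m by omega), hbv,
          dif_neg (show ¬((0:ℕ)+1 = 0) by omega)]
        congr 1
        apply Fin.ext
        show 2^m - ((0:ℕ)+1) = (i:ℕ)
        have := i.isLt
        omega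
    · rw [MulAut.mul_apply, MulAut.mul_apply, MulAut.mul_apply, haz, hbz, map_inv,
        haz, map_inv, hbz, inv_inv, MulAut.one_apply]
  have hbab : b * a * b = a⁻¹ := by
    have h2 : (b * a * b) * a = 1 := by
      rw [show (b * a * b) * a = (b * a) * (b * a) by group]
      exact hbaba
    exact eq_inv_of_mul_eq_one_left h2
  -- dihedral group
  haveI hNne : NeZero (2^(m+1)) := ⟨by positivity⟩
  have hN4 : 4 ≤ 2^(m+1) := by
    calc (4:ℕ) = 2^2 := by norm_num
    _ ≤ 2^(m+1) := Nat.pow_le_pow_right (by norm_num) (by omega)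
  haveI : Fact (1 < 2^(m+1)) := ⟨by omega⟩
  have hpw_add : ∀ s t : ZMod (2^(m+1)), a ^ (s + t).val = a ^ s.val * a ^ t.val := by
    intro s t
    have hmod := pow_mod_orderOf a (s.val + t.val)
    rw [horda] at hmod
    rw [ZMod.val_add, hmod, pow_add]
  have hpw_neg : ∀ t : ZMod (2^(m+1)), a ^ (-t).val = (a ^ t.val)⁻¹ := by
    intro t
    have h := hpw_add (-t) t
    rw [neg_add_cancel, ZMod.val_zero, pow_zero] at h
    exact eq_inv_of_mul_eq_one_left h.symm
  have hab : a * b = b * a⁻¹ := by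
    have h1 := congrArg (fun x => b * x) hbab
    change b * (b * a * b) = b * a⁻¹ at h1
    rw [← mul_assoc, ← mul_assoc, hb2, one_mul] at h1
    exact h1
  have hpow_b : ∀ k : ℕ, a ^ k * b = b * (a ^ k)⁻¹ := by
    intro k
    induction k with
    | zero => simp
    | succ k ih =>
      calc a^(k+1)*b = a * (a^k * b) := by rw [pow_succ', mul_assoc]
        _ = a * (b * (a^k)⁻¹) := by rw [ih]
        _ = (a * b) * (a^k)⁻¹ := by rw [mul_assoc]
        _ = (b * a⁻¹) * (a^k)⁻¹ := by rw [hab]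
        _ = b * (a^k * a)⁻¹ := by rw [mul_inv_rev, mul_assoc]
        _ = b * (a^(k+1))⁻¹ := by rw [pow_succ]
  let f : DihedralGroup (2^(m+1)) →* MulAut V :=
    { toFun := fun x => match x with
        | DihedralGroup.r t => a ^ t.val
        | DihedralGroup.sr t => b * a ^ t.val
      map_one' := by
        rw [DihedralGroup.one_def]
        show a ^ (0 : ZMod (2^(m+1))).val = 1
        rw [ZMod.val_zero, pow_zero]
      map_mul' := by
        rintro (s | s) (t | t)
        · rw [DihedralGroup.r_mul_r]
          exact hpw_add s t
        · rw [DihedralGroup.r_mul_sr]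
          show b * a ^ (t - s).val = a ^ s.val * (b * a ^ t.val)
          rw [← mul_assoc, hpow_b, mul_assoc, ← hpw_neg, ← hpw_add,
            show -s + t = t - s by ring]
        · rw [DihedralGroup.sr_mul_r]
          show b * a ^ (s + t).val = (b * a ^ s.val) * a ^ t.val
          rw [hpw_add, mul_assoc]
        · rw [DihedralGroup.sr_mul_sr]
          show a ^ (t - s).val = (b * a ^ s.val) * (b * a ^ t.val)
          rw [show (b * a ^ s.val) * (b * a ^ t.val)
              = (b * (a ^ s.val * b)) * a ^ t.val by group,
            hpow_b, ← mul_assoc, hb2, one_mul, ← hpw_neg, ← hpw_add,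
            show -s + t = t - s by ring] }
  have hfr : ∀ t : ZMod (2^(m+1)), f (DihedralGroup.r t) = a ^ t.val := fun _ => rfl
  have hfsr : ∀ t : ZMod (2^(m+1)), f (DihedralGroup.sr t) = b * a ^ t.val :=
    fun _ => rfl
  have hnotinb : ∀ k : ℕ, b ≠ (a ^ k)⁻¹ := by
    intro k hbk
    have hcomm2 : a * b = b * a := by
      rw [hbk]
      exact (((Commute.refl a).pow_right k).inv_right).eq
    have haa : a = a⁻¹ := by
      have h1 : b * a = b * a⁻¹ := by rw [← hcomm2, hab]
      exact mul_left_cancel h1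
    have ha2 : a ^ 2 = 1 := by
      rw [pow_two]
      nth_rewrite 2 [haa]
      exact mul_inv_cancel a
    have hdvd2 : orderOf a ∣ 2 := orderOf_dvd_of_pow_eq_one ha2
    rw [horda] at hdvd2
    have := Nat.le_of_dvd (by norm_num) hdvd2
    omega
  have hinj : Function.Injective f := by
    rw [injective_iff_map_eq_one]
    rintro (t | t) h
    · rw [hfr] at h
      have hd : orderOf a ∣ t.val := orderOf_dvd_of_pow_eq_one h
      rw [horda] at hd
      have hval : t.val = 0 := Nat.eq_zero_of_dvd_of_lt hd (ZMod.val_lt t)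
      rw [DihedralGroup.one_def]
      congr 1
      exact (ZMod.val_eq_zero t).mp hval
    · rw [hfsr] at h
      exact absurd (eq_inv_of_mul_eq_one_left h) (hnotinb t.val)
  have hrange : f.range = Subgroup.closure ({a, b} : Set (MulAut V)) := by
    apply le_antisymm
    · rintro x ⟨y, rfl⟩
      rcases y with t | t
      · rw [hfr]
        exact Subgroup.pow_mem _ (Subgroup.subset_closure (by simp)) _
      · rw [hfsr]
        exact Subgroup.mul_mem _ (Subgroup.subset_closure (by simp))
          (Subgroup.pow_mem _ (Subgroup.subset_closure (by simp)) _)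
    · rw [Subgroup.closure_le]
      intro x hx
      rcases Set.mem_insert_iff.mp hx with rfl | hx2
      · exact ⟨DihedralGroup.r 1, by rw [hfr, ZMod.val_one, pow_one]⟩
      · rw [Set.mem_singleton_iff] at hx2
        exact ⟨DihedralGroup.sr 0, by rw [hfsr, ZMod.val_zero, pow_zero, mul_one, hx2]⟩
  have hiso : (↥(Subgroup.closure ({a, b} : Set (MulAut V))) ≃*
      DihedralGroup (2^(m+1))) :=
    (MulEquiv.subgroupCongr hrange.symm).trans (MonoidHom.ofInjective hinj).symm
  have hcardcl : Nat.card ↥(Subgroup.closure ({a, b} : Set (MulAut V))) = 2^(m+2) := by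
    rw [Nat.card_congr hiso.toEquiv, Nat.card_eq_fintype_card, DihedralGroup.card]
    rw [pow_succ 2 (m+1)]
    ring
  exact ⟨a, b, hav, haz, horda, hbv, hbz, hordb, hbab, hcardcl, ⟨hiso⟩⟩
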